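/- Let F = [c_1,...,c_m] be an n × m Ferrers diagram and let 1 ≤ r ≤ min{n,m}. If κ(F,r) ≥ 1, then |D_i ∩ F| = i for all 1 ≤ i ≤ r, where D_i is the i-th diagonal of the board. -/

import Mathlib

/-- The `n × m` matrix board `[n] × [m]` (1-based). -/
def board (n m : ℕ) : Finset (ℕ × ℕ) := Finset.Icc 1 n ×ˢ Finset.Icc 1 m

/-- `F` is an `n × m` Ferrers diagram: contained in the board, contains `(1,1)` and `(n,m)`,
right-aligned and top-aligned. -/
def IsFerrers (n m : ℕ) (F : Finset (ℕ × ℕ)) : Prop :=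
  F ⊆ board n m ∧ (1, 1) ∈ F ∧ (n, m) ∈ F ∧
  (∀ i j, (i, j) ∈ F → j < m → (i, j + 1) ∈ F) ∧
  (∀ i j, (i, j) ∈ F → 1 < i → (i - 1, j) ∈ F)

/-- The `r`-th diagonal of the `n × m` board: `{(i,j) : j - i = m - r}`. -/
def diag (n m r : ℕ) : Finset (ℕ × ℕ) :=
  (board n m).filter (fun p => p.2 + r = p.1 + m)

/-- The height `c_t` of the `t`-th column of `F`. -/
def colH (F : Finset (ℕ × ℕ)) (t : ℕ) : ℕ := (F.filter (fun p => p.2 = t)).card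

/-- `κ_j(F,d) = Σ_{t=1}^{m-d+1+j} max{c_t - j, 0}` (truncated subtraction). -/
def kappaJ (F : Finset (ℕ × ℕ)) (m d j : ℕ) : ℕ :=
  ∑ t ∈ Finset.Icc 1 (m - d + 1 + j), (colH F t - j)

/-- `κ(F,d) = min_{0 ≤ j ≤ d-1} κ_j(F,d)`. -/
noncomputable def kappa (F : Finset (ℕ × ℕ)) (m d : ℕ) : ℕ :=
  sInf (kappaJ F m d '' Set.Iio d)

/-- `Σ_{i=1}^{m+n-1} max{0, |D_i ∩ F| - (d-1)}` (truncated subtraction). -/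
def diagSum (n m : ℕ) (F : Finset (ℕ × ℕ)) (d : ℕ) : ℕ :=
  ∑ i ∈ Finset.Icc 1 (m + n - 1), ((diag n m i ∩ F).card - (d - 1))

/-- The pair `(F,d)` is MDS-constructible. -/
def MDSConstructible (n m : ℕ) (F : Finset (ℕ × ℕ)) (d : ℕ) : Prop :=
  kappa F m d = diagSum n m F d

-- downward closure
lemma ferrers_down {n m : ℕ} {F : Finset (ℕ × ℕ)} (hF : IsFerrers n m F) :
    ∀ x t, (x, t) ∈ F → ∀ y, 1 ≤ y → y ≤ x → (y, t) ∈ F := by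
  intro x
  induction x with
  | zero => intro t hx y h1 h2; omega
  | succ k ih =>
    intro t hx y h1 h2
    rcases eq_or_lt_of_le h2 with h | h
    · exact h ▸ hx
    · have hk1 : 1 ≤ k := by omega
      have := hF.2.2.2.2 (k+1) t hx (by omega)
      simp only [Nat.add_sub_cancel] at this
      exact ih t this y h1 (by omega)

lemma mem_iff_le_colH {n m : ℕ} {F : Finset (ℕ × ℕ)} (hF : IsFerrers n m F)
    (x t : ℕ) (hx : 1 ≤ x) : (x, t) ∈ F ↔ x ≤ colH F t := by
  constructor
  · intro h
    have hsub : (Finset.Icc 1 x).image (fun y => (y, t)) ⊆ F.filter (fun p => p.2 = t) := by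
      intro p hp
      simp only [Finset.mem_image, Finset.mem_Icc] at hp
      obtain ⟨y, ⟨hy1, hy2⟩, rfl⟩ := hp
      exact Finset.mem_filter.mpr ⟨ferrers_down hF x t h y hy1 hy2, rfl⟩
    have := Finset.card_le_card hsub
    rw [Finset.card_image_of_injective _ (fun a b hab => by simpa using hab),
      Nat.card_Icc] at this
    unfold colH
    omega
  · intro h
    have hne : (F.filter (fun p => p.2 = t)).Nonempty := by
      rw [← Finset.card_pos]
      unfold colH at h
      omega
    obtain ⟨p, hp, hmax⟩ := Finset.exists_max_image _ (fun p => p.1) hne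
    simp only [Finset.mem_filter] at hp
    have hsub : F.filter (fun p => p.2 = t) ⊆ (Finset.Icc 1 p.1).image (fun y => (y, t)) := by
      intro q hq
      have hq' := hq
      simp only [Finset.mem_filter] at hq'
      have hb := hF.1 hq'.1
      simp only [board, Finset.mem_product, Finset.mem_Icc] at hb
      simp only [Finset.mem_image, Finset.mem_Icc]
      exact ⟨q.1, ⟨hb.1.1, hmax q hq⟩, by rw [← hq'.2]⟩
    have hc := Finset.card_le_card hsub
    rw [Finset.card_image_of_injective _ (fun a b hab => by simpa using hab),
      Nat.card_Icc] at hc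
    have : x ≤ p.1 := by unfold colH at h; omega
    have hpF : (p.1, t) ∈ F := by rw [← hp.2]; exact hp.1
    exact ferrers_down hF p.1 t hpF x hx this

lemma colH_mono_step {n m : ℕ} {F : Finset (ℕ × ℕ)} (hF : IsFerrers n m F)
    {t : ℕ} (ht : t < m) : colH F t ≤ colH F (t + 1) := by
  apply Finset.card_le_card_of_injOn (fun p => (p.1, t + 1))
  · intro p hp
    simp only [Finset.mem_coe, Finset.mem_filter] at hp
    have : (p.1, t) ∈ F := by rw [← hp.2]; exact hp.1
    exact Finset.mem_filter.mpr ⟨hF.2.2.2.1 p.1 t this ht, rfl⟩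
  · intro p hp q hq h
    simp only [Finset.coe_filter, Set.mem_setOf_eq] at hp hq
    have h2 : (p.1, t+1) = (q.1, t+1) := h
    injection h2 with h1 _
    exact Prod.ext h1 (hp.2.trans hq.2.symm)

lemma colH_mono {n m : ℕ} {F : Finset (ℕ × ℕ)} (hF : IsFerrers n m F)
    {t t' : ℕ} (h : t ≤ t') (hm : t' ≤ m) : colH F t ≤ colH F t' := by
  induction t' , h using Nat.le_induction with
  | base => exact le_refl _
  | succ k hk ih => exact le_trans (ih (by omega)) (colH_mono_step hF (by omega))


theorem diag_card_eq_of_kappa_pos (n m : ℕ) (F : Finset (ℕ × ℕ)) (hF : IsFerrers n m F)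
    (r : ℕ) (hr1 : 1 ≤ r) (hr2 : r ≤ min n m) (hk : 1 ≤ kappa F m r) :
    ∀ i, 1 ≤ i → i ≤ r → (diag n m i ∩ F).card = i := by
  intro i h1 hi
  have hin : i ≤ n := by omega
  have him : i ≤ m := by omega
  have hrm : r ≤ m := by omega
  -- every kappaJ is ≥ 1
  have hkJ : ∀ j, j < r → 1 ≤ kappaJ F m r j := by
    intro j hj
    have : kappaJ F m r j ∈ kappaJ F m r '' Set.Iio r := ⟨j, hj, rfl⟩
    have := Nat.sInf_le this
    unfold kappa at hk; omega
  -- diag as an image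
  have hdiag : diag n m i = (Finset.Icc 1 i).image (fun a => (a, a + m - i)) := by
    ext ⟨a, b⟩
    simp only [diag, board, Finset.mem_filter, Finset.mem_product, Finset.mem_Icc,
      Finset.mem_image, Prod.mk.injEq]
    constructor
    · rintro ⟨⟨⟨ha1, ha2⟩, hb1, hb2⟩, heq⟩
      exact ⟨a, ⟨ha1, by omega⟩, rfl, by omega⟩
    · rintro ⟨x, ⟨hx1, hx2⟩, rfl, rfl⟩
      refine ⟨⟨⟨hx1, by omega⟩, by omega, by omega⟩, by omega⟩
  -- diag ⊆ F
  have hsub : diag n m i ⊆ F := by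
    rw [hdiag]
    intro p hp
    simp only [Finset.mem_image, Finset.mem_Icc] at hp
    obtain ⟨a, ⟨ha1, ha2⟩, rfl⟩ := hp
    set j : ℕ := a - 1 + r - i with hjdef
    have hjr : j < r := by omega
    have h1k := hkJ j hjr
    -- find a column with height > j
    have hex : ∃ t ∈ Finset.Icc 1 (m - r + 1 + j), j < colH F t := by
      by_contra hcon
      push_neg at hcon
      have : kappaJ F m r j = 0 := by
        unfold kappaJ
        apply Finset.sum_eq_zero
        intro t ht
        have := hcon t ht
        omega
      omega
    obtain ⟨t, ht, hcol⟩ := hex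
    simp only [Finset.mem_Icc] at ht
    have heq : m - r + 1 + j = a + m - i := by omega
    have hmono : colH F t ≤ colH F (a + m - i) :=
      colH_mono hF (by omega) (by omega)
    rw [mem_iff_le_colH hF a (a + m - i) ha1]
    omega
  have hinter : diag n m i ∩ F = diag n m i := Finset.inter_eq_left.mpr hsub
  rw [hinter, hdiag, Finset.card_image_of_injOn, Nat.card_Icc]
  · omega
  · intro x hx y hy h
    simpa using congrArg Prod.fst h
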